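/- For every positive integer m and every real β with 1 < β ≤ λ_m, the (m+1)-th iterates satisfy T_{0,β}^{m+1}((1+β-β²)/(β²-1)) ≥ 1/(β²-1) and T_{1,β}^{m+1}(β²/(β²-1)) ≤ β/(β²-1). -/
import Mathlib


/-- `r` is the smallest real root greater than 1 of `P`. -/
def IsSmallestRootGT1 (P : ℝ → ℝ) (r : ℝ) : Prop :=
  1 < r ∧ P r = 0 ∧ ∀ y : ℝ, 1 < y → P y = 0 → r ≤ y

lemma iter0 (β x : ℝ) (k : ℕ) : (fun y : ℝ => β * y)^[k] x = β ^ k * x := by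
  induction k with
  | zero => simp
  | succ n ih => rw [Function.iterate_succ_apply', ih, pow_succ]; ring

lemma iter1 (β x : ℝ) (hβ : β ≠ 1) (k : ℕ) :
    (fun y : ℝ => β * y - 1)^[k] x = β ^ k * x - (β ^ k - 1) / (β - 1) := by
  have hβ1 : β - 1 ≠ 0 := sub_ne_zero.mpr hβ
  induction k with
  | zero => simp
  | succ n ih =>
    rw [Function.iterate_succ_apply', ih, pow_succ]
    field_simp
    ring

lemma key_P_nonpos (m : ℕ) (hm : 0 < m) (lam : ℝ)
    (hlam : IsSmallestRootGT1 (fun y => y ^ (m + 3) - y ^ (m + 2) - y ^ (m + 1) + 1) lam)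
    (β : ℝ) (hβ : 1 < β) (hβlam : β ≤ lam) :
    β ^ (m + 3) - β ^ (m + 2) - β ^ (m + 1) + 1 ≤ 0 := by
  set Q : ℝ → ℝ := fun x => x ^ (m + 2) - ∑ i ∈ Finset.range (m + 1), x ^ i with hQ
  have hfact : ∀ x : ℝ, x ^ (m + 3) - x ^ (m + 2) - x ^ (m + 1) + 1 = (x - 1) * Q x := by
    intro x
    have := geom_sum_mul x (m + 1)
    simp only [hQ]
    linear_combination this
  have hQ1 : Q 1 < 0 := by
    simp only [hQ, one_pow, Finset.sum_const, Finset.card_range, nsmul_eq_mul, mul_one]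
    have h1 : (1:ℝ) ≤ (m:ℝ) := by exact_mod_cast hm
    push_cast
    linarith
  by_contra hcon
  push_neg at hcon
  have hQβ : 0 < Q β := by
    have h1 : 0 < β - 1 := by linarith
    have := hfact β
    nlinarith
  have hcont : ContinuousOn Q (Set.Icc 1 β) := by
    apply Continuous.continuousOn
    continuity
  obtain ⟨c, hc, hQc⟩ := intermediate_value_Icc (le_of_lt hβ) hcont
    (Set.mem_Icc.mpr ⟨le_of_lt hQ1, le_of_lt hQβ⟩)
  have hc1 : 1 < c := by
    rcases lt_or_eq_of_le hc.1 with h | h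
    · exact h
    · exfalso; rw [← h] at hQc; linarith
  have hPc : c ^ (m + 3) - c ^ (m + 2) - c ^ (m + 1) + 1 = 0 := by
    rw [hfact c, hQc, mul_zero]
  have hlamc : lam ≤ c := hlam.2.2 c hc1 hPc
  have : c = β := le_antisymm hc.2 (le_trans hβlam hlamc)
  rw [this] at hQc
  linarith

theorem iterate_bounds_of_le_lambda (m : ℕ) (hm : 0 < m) (lam : ℝ)
    (hlam : IsSmallestRootGT1 (fun y => y ^ (m + 3) - y ^ (m + 2) - y ^ (m + 1) + 1) lam)
    (β : ℝ) (hβ : 1 < β) (hβlam : β ≤ lam) :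
    1 / (β ^ 2 - 1) ≤ (fun y : ℝ => β * y)^[m + 1] ((1 + β - β ^ 2) / (β ^ 2 - 1)) ∧
      (fun y : ℝ => β * y - 1)^[m + 1] (β ^ 2 / (β ^ 2 - 1)) ≤ β / (β ^ 2 - 1) := by
  have hP := key_P_nonpos m hm lam hlam β hβ hβlam
  have hβ1 : (0:ℝ) < β - 1 := by linarith
  have hβ2 : (0:ℝ) < β ^ 2 - 1 := by nlinarith
  have e2 : β ^ (m + 2) = β ^ (m + 1) * β := by rw [pow_succ]
  have e3 : β ^ (m + 3) = β ^ (m + 1) * β * β := by rw [pow_succ, pow_succ]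
  have hpowpos : (0:ℝ) < β ^ (m + 1) := pow_pos (by linarith) _
  constructor
  · rw [iter0, mul_div_assoc', div_le_div_iff₀ hβ2 hβ2]
    nlinarith
  · rw [iter1 β _ (by linarith), mul_div_assoc',
      div_sub_div _ _ (ne_of_gt hβ2) (ne_of_gt hβ1), div_le_div_iff₀ (by positivity) hβ2]
    have key : (β ^ (m + 1) * β ^ 2 * (β - 1) - (β ^ 2 - 1) * (β ^ (m + 1) - 1)) * (β ^ 2 - 1)
        - β * ((β ^ 2 - 1) * (β - 1))
        = (β ^ 2 - 1) * ((β - 1) * (β ^ (m + 3) - β ^ (m + 2) - β ^ (m + 1) + 1)) := by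
      linear_combination (β ^ 2 - 1) * (β - 1) * e3 - (β ^ 2 - 1) * (β - 1) * e2
    have h1 : (β ^ 2 - 1) * ((β - 1) * (β ^ (m + 3) - β ^ (m + 2) - β ^ (m + 1) + 1)) ≤ 0 :=
      mul_nonpos_of_nonneg_of_nonpos hβ2.le (mul_nonpos_of_nonneg_of_nonpos hβ1.le hP)
    linarith [key, h1]
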